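/- arXiv:math/0104046 — 2 statements merged into one kernel-verified Lean document; each statement's English description precedes it below -/
import Mathlib

section
/- Let X be an integral locally noetherian space with big injective E_X. If E is any indecomposable injective object of Mod X such that End(E) is a division ring and every object of Mod X is a subquotient of a coproduct of copies of E, then E is isomorphic to E_X. That is, the big injective is unique up to isomorphism. -/
open CategoryTheory CategoryTheory.Limits

universe w v u

section Preliminaries

variable {C : Type u} [Category.{v} C]

/-- An object of a category is *noetherian* if its lattice of subobjects satisfies
the ascending chain condition. -/
def IsNoetherianObject (N : C) : Prop := WellFoundedGT (Subobject N)

/-- A Grothendieck category (non-commutative space) is *locally noetherian* if it has a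
set of noetherian generators, i.e. a separating family of noetherian objects. -/
def LocallyNoetherian (C : Type u) [Category.{v} C] : Prop :=
  ∃ (ι : Type v) (G : ι → C), (∀ i, _root_.IsNoetherianObject (G i)) ∧
    ObjectProperty.IsSeparating (fun X => X ∈ Set.range G)

/-- `M` is a subquotient of `N`: a quotient of a subobject of `N`. -/
def IsSubquotient (N M : C) : Prop :=
  ∃ (S : Subobject N) (f : (S : C) ⟶ M), Epi f

end Preliminaries

/-- Any abelian category has finite biproducts. -/
instance (priority := 100) abelianHasFiniteBiproducts {C : Type u} [Category.{v} C]
    [Abelian C] : HasFiniteBiproducts C :=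
  HasFiniteBiproducts.of_hasFiniteProducts

section BigInjective

variable {C : Type u} [Category.{v} C] [Abelian C] [HasColimits C] [AB5 C]

/-- `E` is the *big injective* making the locally noetherian space `X` (with `Mod X = C`)
an integral space: `E` is an indecomposable injective object whose endomorphism ring is a
division ring, and every object is a subquotient of a coproduct of copies of `E`. -/
structure IsBigInjective (E : C) : Prop where
  injective : Injective E
  nonzero : ¬ IsZero E
  indecomposable : ∀ (A B : C), (E ≅ A ⊞ B) → IsZero A ∨ IsZero B
  division : ∀ f : E ⟶ E, f ≠ 0 → IsIso f
  generates : ∀ M : C, ∃ ι : Type v, IsSubquotient (∐ (fun _ : ι => E)) M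

/-- An object `M` is *torsion* (with respect to the big injective `E`) if `Hom(M, E) = 0`. -/
def IsTorsion (E M : C) : Prop := ∀ f : M ⟶ E, f = 0

/-- An object `M` is *torsion-free* if its only torsion subobject is `0`. -/
def IsTorsionFree (E M : C) : Prop := ∀ S : Subobject M, IsTorsion E (S : C) → S = ⊥

/-- The *rank* of `M`: the length of `Hom(M, E)` as a left module over the division ring
`End(E)`, expressed as the Krull dimension of its lattice of submodules. -/
noncomputable def rank (E M : C) : WithBot ℕ∞ :=
  Order.krullDim (Submodule (End E) (M ⟶ E))

/-- A subobject `L` of `M` is *essential* if every nonzero subobject of `M` meets it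
nontrivially. -/
def IsEssentialSubobject {M : C} (L : Subobject M) : Prop :=
  ∀ S : Subobject M, S ≠ ⊥ → S ⊓ L ≠ ⊥

end BigInjective

/-- Corollary 3.9. The big injective of an integral locally noetherian
space is unique up to isomorphism. -/
theorem statement3 {C : Type u} [Category.{v} C] [Abelian C] [HasColimits C] [AB5 C]
    (hX : LocallyNoetherian C) (E : C) (hE : IsBigInjective E)
    (E' : C) (hE' : IsBigInjective E') :
    Nonempty (E' ≅ E) := by
  classical
  have hinjE : Injective E := hE.injective
  have hinjE' : Injective E' := hE'.injective
  -- Step 1: an epimorphism `F : ∐ E ⟶ E'`.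
  obtain ⟨ι, S, e, he⟩ := hE.generates E'
  haveI := he
  let F : (∐ fun _ : ι => E) ⟶ E' := Injective.factorThru e S.arrow
  have hF : S.arrow ≫ F = e := Injective.comp_factorThru e S.arrow
  haveI hFepi : Epi F := by
    have : Epi (S.arrow ≫ F) := by rw [hF]; exact he
    exact epi_of_epi S.arrow F
  -- Step 2: a nonzero morphism `g : E' ⟶ E`.
  obtain ⟨ι', S', e', he'⟩ := hE'.generates E
  haveI := he'
  let F' : (∐ fun _ : ι' => E') ⟶ E := Injective.factorThru e' S'.arrow
  have hF' : S'.arrow ≫ F' = e' := Injective.comp_factorThru e' S'.arrow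
  have hF'ne : F' ≠ 0 := by
    intro h0
    have he0 : e' = 0 := by rw [← hF', h0, comp_zero]
    rw [he0] at he'
    exact hE.nonzero (IsZero.of_epi_zero (S' : C) E)
  obtain ⟨j, hj⟩ : ∃ j, Sigma.ι (fun _ : ι' => E') j ≫ F' ≠ 0 := by
    by_contra hc
    push_neg at hc
    exact hF'ne (Sigma.hom_ext _ _ fun j => by rw [hc j, comp_zero])
  set g : E' ⟶ E := Sigma.ι (fun _ : ι' => E') j ≫ F' with hg
  -- Step 3: some component `h : E ⟶ E'` of `F` satisfies `h ≫ g ≠ 0`.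
  obtain ⟨i, hi⟩ : ∃ i, (Sigma.ι (fun _ : ι => E) i ≫ F) ≫ g ≠ 0 := by
    by_contra hc
    push_neg at hc
    have hFg : F ≫ g = 0 := Sigma.hom_ext _ _ fun i => by
      rw [← Category.assoc, hc i, comp_zero]
    have : g = 0 := by
      rw [← cancel_epi F, hFg, comp_zero]
    exact hj this
  set h : E ⟶ E' := Sigma.ι (fun _ : ι => E) i ≫ F with hh
  -- Step 4: `h ≫ g` is an isomorphism, hence `h` is a split mono.
  have hiso : IsIso (h ≫ g) := hE.division _ hi
  haveI : IsSplitMono h :=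
    IsSplitMono.mk' ⟨g ≫ inv (h ≫ g), by rw [← Category.assoc, IsIso.hom_inv_id]⟩
  -- Step 5: `E' ≅ E ⊞ cokernel h`, so indecomposability forces `cokernel h = 0`.
  have hbil := isBilimitBinaryBiconeOfIsSplitMonoOfCokernel (cokernelIsCokernel h)
  have iso : E' ≅ E ⊞ cokernel h := biprod.uniqueUpToIso _ _ hbil
  rcases hE'.indecomposable E (cokernel h) iso with hz | hz
  · exact absurd hz hE.nonzero
  · haveI : Epi h := Abelian.epi_of_cokernel_π_eq_zero h (hz.eq_zero_of_tgt _)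
    haveI : IsIso h := isIso_of_mono_of_epi h
    exact ⟨(asIso h).symm⟩
end

section
/- Let R be a right noetherian ring such that the category Mod R of right R-modules is integral with big injective E. Suppose δ is a dimension function on Mod R satisfying δ(M ⊗_R I) ≤ δ(M) for every noetherian right R-module M and every two-sided ideal I of R, and suppose E is critical with respect to δ. Then R is a prime ring. -/
open CategoryTheory CategoryTheory.Limits

universe w v u

open scoped ENNReal

/-- A *dimension function* (Definition 6.1): a function `δ` from objects to
`{-∞} ∪ [0,∞]` such that `δ(0) = -∞`, `δ(M) = max (δ L) (δ N)` on short exact sequences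
`0 → L → M → N → 0`, and `δ(M)` is the supremum of the `δ`-values of the noetherian
subobjects of `M`. -/
structure DimensionFunction (C : Type u) [Category.{v} C] [Abelian C] where
  /-- the underlying function on objects -/
  δ : C → WithBot ℝ≥0∞
  zero : ∀ M : C, IsZero M → δ M = ⊥
  exact : ∀ S : CategoryTheory.ShortComplex C, S.ShortExact →
    δ S.X₂ = max (δ S.X₁) (δ S.X₃)
  noeth_sup : ∀ M : C,
    IsLUB {d | ∃ S : Subobject M, _root_.IsNoetherianObject (S : C) ∧ d = δ (S : C)} (δ M)

/-- An object `E` is *critical* for a dimension function `δ` if `δ (E/N) < δ E` for every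
nonzero subobject `N` of `E`. -/
def IsCritical {C : Type u} [Category.{v} C] [Abelian C] (δ : DimensionFunction C)
    (E : C) : Prop :=
  ∀ S : Subobject E, S ≠ ⊥ → δ.δ (cokernel S.arrow) < δ.δ E

/-- `T`, together with the bi-additive balanced map `b : M × I → T`, is the tensor product
`M ⊗_R I` of a right `R`-module `M` (realized as a left `Rᵐᵒᵖ`-module) and a two-sided
ideal `I` of `R`, with right `R`-module structure induced from that of `I`.  This is
expressed by the universal property of the balanced product. -/
structure IsTensorProductWithIdeal (R : Type u) [Ring R] (I : TwoSidedIdeal R)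
    (M : Type u) [AddCommGroup M] [Module Rᵐᵒᵖ M]
    (T : Type u) [AddCommGroup T] [Module Rᵐᵒᵖ T]
    (b : M → I → T) : Prop where
  add_left : ∀ (m m' : M) (x : I), b (m + m') x = b m x + b m' x
  add_right : ∀ (m : M) (x y : I), b m (x + y) = b m x + b m y
  balanced : ∀ (m : M) (r : R) (x : I), b (MulOpposite.op r • m) x = b m (r • x)
  smul_right : ∀ (m : M) (x : I) (r : R),
    b m (MulOpposite.op r • x) = MulOpposite.op r • b m x
  universal : ∀ (P : Type u) [AddCommGroup P] [Module Rᵐᵒᵖ P] (c : M → I → P),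
    (∀ (m m' : M) (x : I), c (m + m') x = c m x + c m' x) →
    (∀ (m : M) (x y : I), c m (x + y) = c m x + c m y) →
    (∀ (m : M) (r : R) (x : I), c (MulOpposite.op r • m) x = c m (r • x)) →
    (∀ (m : M) (x : I) (r : R),
      c m (MulOpposite.op r • x) = MulOpposite.op r • c m x) →
    ∃! f : T →ₗ[Rᵐᵒᵖ] P, ∀ (m : M) (x : I), f (b m x) = c m x


section AuxDelta
variable {R : Type u} [Ring R]

lemma delta_congr (δ : DimensionFunction (ModuleCat.{u} Rᵐᵒᵖ))
    {A B : ModuleCat.{u} Rᵐᵒᵖ} (e : A ≅ B) : δ.δ A = δ.δ B := by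
  let S : ShortComplex (ModuleCat.{u} Rᵐᵒᵖ) :=
    ShortComplex.mk e.hom (0 : B ⟶ ModuleCat.of Rᵐᵒᵖ PUnit.{u+1}) comp_zero
  have hS : S.ShortExact := by
    refine ShortComplex.ShortExact.mk' ?_ ?_ ?_
    · rw [ShortComplex.moduleCat_exact_iff]
      intro x _
      exact ⟨e.inv x, e.inv_hom_id_apply x⟩
    · show Mono e.hom; infer_instance
    · exact (ModuleCat.epi_iff_surjective _).mpr fun y => ⟨0, Subsingleton.elim _ _⟩
  have h := δ.exact S hS
  have hz : δ.δ S.X₃ = ⊥ :=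
    δ.zero S.X₃ (by exact ModuleCat.isZero_of_subsingleton (ModuleCat.of Rᵐᵒᵖ PUnit.{u+1}))
  rw [hz, max_eq_left bot_le] at h
  exact h.symm

lemma delta_equiv (δ : DimensionFunction (ModuleCat.{u} Rᵐᵒᵖ))
    {X Y : Type u} [AddCommGroup X] [Module Rᵐᵒᵖ X] [AddCommGroup Y] [Module Rᵐᵒᵖ Y]
    (e : X ≃ₗ[Rᵐᵒᵖ] Y) :
    δ.δ (ModuleCat.of Rᵐᵒᵖ X) = δ.δ (ModuleCat.of Rᵐᵒᵖ Y) :=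
  delta_congr δ e.toModuleIso

lemma delta_ses (δ : DimensionFunction (ModuleCat.{u} Rᵐᵒᵖ))
    (X : Type u) [AddCommGroup X] [Module Rᵐᵒᵖ X] (W : Submodule Rᵐᵒᵖ X) :
    δ.δ (ModuleCat.of Rᵐᵒᵖ X)
      = max (δ.δ (ModuleCat.of Rᵐᵒᵖ W)) (δ.δ (ModuleCat.of Rᵐᵒᵖ (X ⧸ W))) := by
  let S : ShortComplex (ModuleCat.{u} Rᵐᵒᵖ) :=
    ShortComplex.mk
      (ModuleCat.ofHom W.subtype : ModuleCat.of Rᵐᵒᵖ W ⟶ ModuleCat.of Rᵐᵒᵖ X)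
      (ModuleCat.ofHom W.mkQ : ModuleCat.of Rᵐᵒᵖ X ⟶ ModuleCat.of Rᵐᵒᵖ (X ⧸ W))
      (by ext w; exact (Submodule.Quotient.mk_eq_zero W).mpr w.2)
  have hS : S.ShortExact := by
    refine ShortComplex.ShortExact.mk' ?_ ?_ ?_
    · rw [ShortComplex.moduleCat_exact_iff]
      intro x hx
      rw [show S.g x = Submodule.Quotient.mk x from rfl, Submodule.Quotient.mk_eq_zero] at hx
      exact ⟨⟨x, hx⟩, rfl⟩
    · exact (ModuleCat.mono_iff_injective _).mpr (Submodule.injective_subtype W)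
    · exact (ModuleCat.epi_iff_surjective _).mpr (Submodule.Quotient.mk_surjective W)
  exact δ.exact S hS

lemma delta_sub (δ : DimensionFunction (ModuleCat.{u} Rᵐᵒᵖ))
    (X : Type u) [AddCommGroup X] [Module Rᵐᵒᵖ X] (W : Submodule Rᵐᵒᵖ X) :
    δ.δ (ModuleCat.of Rᵐᵒᵖ W) ≤ δ.δ (ModuleCat.of Rᵐᵒᵖ X) := by
  rw [delta_ses δ X W]; exact le_max_left _ _

lemma delta_quot (δ : DimensionFunction (ModuleCat.{u} Rᵐᵒᵖ))
    (X : Type u) [AddCommGroup X] [Module Rᵐᵒᵖ X] (W : Submodule Rᵐᵒᵖ X) :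
    δ.δ (ModuleCat.of Rᵐᵒᵖ (X ⧸ W)) ≤ δ.δ (ModuleCat.of Rᵐᵒᵖ X) := by
  rw [delta_ses δ X W]; exact le_max_right _ _

lemma delta_coker_lt (δ : DimensionFunction (ModuleCat.{u} Rᵐᵒᵖ))
    (E : ModuleCat.{u} Rᵐᵒᵖ) (hcrit : IsCritical δ E)
    (W : Submodule Rᵐᵒᵖ E) (hW : W ≠ ⊥) :
    δ.δ (ModuleCat.of Rᵐᵒᵖ ((E : Type u) ⧸ W)) < δ.δ E := by
  let f : ModuleCat.of Rᵐᵒᵖ W ⟶ E := ModuleCat.ofHom W.subtype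
  haveI : Mono f := (ModuleCat.mono_iff_injective _).mpr (Submodule.injective_subtype W)
  have hS : Subobject.mk f ≠ ⊥ := by
    intro h0
    rw [Subobject.mk_eq_bot_iff_zero] at h0
    obtain ⟨v, hv, hv0⟩ := (Submodule.ne_bot_iff W).mp hW
    exact hv0 (by rw [show v = f ⟨v, hv⟩ from rfl, h0]; rfl)
  have h := hcrit (Subobject.mk f) hS
  have e1 : cokernel (Subobject.mk f).arrow ≅ cokernel f := by
    refine ?_ ≪≫ cokernelEpiComp (Subobject.underlyingIso f).hom f
    exact cokernelIsoOfEq (Subobject.underlyingIso_hom_comp_eq_mk f).symm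
  have e2 : cokernel f ≅ ModuleCat.of Rᵐᵒᵖ ((E : Type u) ⧸ W) :=
    ModuleCat.cokernelIsoRangeQuotient f ≪≫
      (Submodule.quotEquivOfEq (LinearMap.range f.hom) W
        (Submodule.range_subtype W)).toModuleIso
  rwa [delta_congr δ (e1 ≪≫ e2)] at h

lemma delta_sub_eq (δ : DimensionFunction (ModuleCat.{u} Rᵐᵒᵖ))
    (E : ModuleCat.{u} Rᵐᵒᵖ) (hcrit : IsCritical δ E)
    (W : Submodule Rᵐᵒᵖ E) (hW : W ≠ ⊥) :
    δ.δ (ModuleCat.of Rᵐᵒᵖ W) = δ.δ E := by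
  have hses := delta_ses δ (E : Type u) W
  rw [ModuleCat.of_coe] at hses
  have hlt := delta_coker_lt δ E hcrit W hW
  rcases max_cases (δ.δ (ModuleCat.of Rᵐᵒᵖ W))
      (δ.δ (ModuleCat.of Rᵐᵒᵖ ((E : Type u) ⧸ W))) with ⟨h1, _⟩ | ⟨h1, _⟩
  · rw [hses, h1]
  · rw [hses, h1] at hlt; exact absurd hlt (lt_irrefl _)
end AuxDelta


section AuxKilled
variable {R : Type u} [Ring R]

lemma exists_smul_ne (E : ModuleCat.{u} Rᵐᵒᵖ) (hE : IsBigInjective E)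
    (K : TwoSidedIdeal R) (hK : K ≠ ⊥) :
    ∃ (e : E) (x : R), x ∈ K ∧ MulOpposite.op x • e ≠ 0 := by
  by_contra h
  push_neg at h
  apply hK
  have hzero : ∀ x ∈ K, x = 0 := by
    intro x hx
    obtain ⟨ι, S, f, hfepi⟩ := hE.generates (ModuleCat.of Rᵐᵒᵖ Rᵐᵒᵖ)
    haveI := hfepi
    classical
    -- the direct sum is killed by x
    have hDS : ∀ (m : DirectSum ι (fun _ => (E : Type u))), MulOpposite.op x • m = 0 := by
      intro m
      refine DFunLike.ext _ _ fun i => ?_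
      show (MulOpposite.op x • m) i = (0 : DirectSum ι (fun _ => (E : Type u))) i
      rw [DirectSum.smul_apply, DirectSum.zero_apply]
      exact h (m i) x hx
    -- the coproduct is killed by x
    have hCop : ∀ (m : ↥(∐ fun (_ : ι) => E)),
        MulOpposite.op x • m = 0 := by
      intro m
      set κ := (ModuleCat.coprodIsoDirectSum (fun _ : ι => E)).hom with hκdef
      have hκ : Function.Injective κ := by
        intro a b hab
        have h1 := congrArg ((ModuleCat.coprodIsoDirectSum (fun _ : ι => E)).inv) hab
        have h2 := (ModuleCat.coprodIsoDirectSum (fun _ : ι => E)).hom_inv_id_apply a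
        have h3 := (ModuleCat.coprodIsoDirectSum (fun _ : ι => E)).hom_inv_id_apply b
        exact h2.symm.trans (h1.trans h3)
      apply hκ
      rw [map_smul, map_zero, hDS]
    -- the subobject is killed by x
    have hSub : ∀ (s : ((S : ModuleCat.{u} Rᵐᵒᵖ) : Type u)), MulOpposite.op x • s = 0 := by
      intro s
      have hinj : Function.Injective S.arrow := (ModuleCat.mono_iff_injective _).mp inferInstance
      apply hinj
      rw [map_smul, map_zero, hCop]
    -- hence R is killed by x
    obtain ⟨s, hs⟩ := (ModuleCat.epi_iff_surjective f).mp hfepi (1 : Rᵐᵒᵖ)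
    have h1 : MulOpposite.op x • (1 : Rᵐᵒᵖ) = 0 := by
      calc MulOpposite.op x • (1 : Rᵐᵒᵖ) = MulOpposite.op x • f s := by rw [hs]
        _ = f (MulOpposite.op x • s) := (f.hom.map_smul _ s).symm
        _ = f 0 := by rw [hSub s]
        _ = 0 := map_zero f.hom
    have h2 : (MulOpposite.op x : Rᵐᵒᵖ) = 0 := by rwa [smul_eq_mul, mul_one] at h1
    simpa using h2
  refine SetLike.ext fun z => ⟨fun hz => ?_, fun hz => ?_⟩
  · simpa using hzero z hz
  · simp only [show z = 0 by simpa using hz]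
    exact K.zero_mem

end AuxKilled

/-- Proposition 6.6. Let `R` be a right noetherian ring such that
`Mod R` (realized as left modules over `Rᵐᵒᵖ`) is integral with big injective `E`.
Suppose `δ` is a dimension function on `Mod R` such that `δ(M ⊗_R I) ≤ δ(M)` for every
noetherian right `R`-module `M` and every two-sided ideal `I` of `R`, and suppose `E` is
critical with respect to `δ`.  Then `R` is a prime ring. -/
theorem statement19 (R : Type u) [Ring R] [IsNoetherianRing Rᵐᵒᵖ]
    (E : ModuleCat.{u} Rᵐᵒᵖ) (hE : IsBigInjective E)
    (δ : DimensionFunction (ModuleCat.{u} Rᵐᵒᵖ))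
    (htensor : ∀ (M : ModuleCat.{u} Rᵐᵒᵖ), _root_.IsNoetherianObject M →
      ∀ (I : TwoSidedIdeal R) (T : Type u) [AddCommGroup T] [Module Rᵐᵒᵖ T]
        (b : M → I → T),
        IsTensorProductWithIdeal R I M T b →
        δ.δ (ModuleCat.of Rᵐᵒᵖ T) ≤ δ.δ M)
    (hcrit : IsCritical δ E) :
    ∀ I J : TwoSidedIdeal R, (∀ x ∈ I, ∀ y ∈ J, x * y = 0) → I = ⊥ ∨ J = ⊥ := by
  intro I J hIJ
  by_contra hcon
  push_neg at hcon
  obtain ⟨hI, hJ⟩ := hcon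
  obtain ⟨e', x, hxI, hx⟩ := exists_smul_ne E hE I hI
  obtain ⟨e, y, hyJ, hy⟩ := exists_smul_ne E hE J hJ
  -- `G` is the annihilator of `J` in `E`
  let G : Submodule Rᵐᵒᵖ E :=
    { carrier := {g | ∀ z ∈ J, MulOpposite.op z • g = 0}
      add_mem' := fun {a b} ha hb z hz => by rw [smul_add, ha z hz, hb z hz, add_zero]
      zero_mem' := fun z _ => smul_zero _
      smul_mem' := fun r g hg z hz => by
        rw [← MulOpposite.op_unop r, ← mul_smul, ← MulOpposite.op_mul]
        exact hg (r.unop * z) (J.mul_mem_left _ _ hz) }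
  have hG : G ≠ ⊥ := by
    intro hbot
    have hmem : MulOpposite.op x • e' ∈ G := by
      show ∀ z ∈ J, MulOpposite.op z • (MulOpposite.op x • e') = 0
      intro z hz
      rw [← mul_smul, ← MulOpposite.op_mul, hIJ x hxI z hz, MulOpposite.op_zero, zero_smul]
    rw [hbot, Submodule.mem_bot] at hmem
    exact hx hmem
  let Ebar := ((E : Type u) ⧸ G)
  let ebar : Ebar := Submodule.Quotient.mk e
  let ψ : Rᵐᵒᵖ →ₗ[Rᵐᵒᵖ] Ebar := LinearMap.toSpanSingleton Rᵐᵒᵖ Ebar ebar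
  let A : Submodule Rᵐᵒᵖ Rᵐᵒᵖ := LinearMap.ker ψ
  let N : Submodule Rᵐᵒᵖ J :=
    Submodule.span Rᵐᵒᵖ
      {z : J | ∃ (a : R) (w : J), MulOpposite.op a ∈ A ∧ (z : R) = a * (w : R)}
  let T := ((J : Type u) ⧸ N)
  let b : (Rᵐᵒᵖ ⧸ A) → J → T := fun m z =>
    Quotient.liftOn' m (fun ρ => Submodule.Quotient.mk (ρ.unop • z)) (by
      intro ρ σ hρσ
      have hA : ρ - σ ∈ A := (Submodule.quotientRel_def A).mp hρσ
      rw [Submodule.Quotient.eq]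
      have heq : ρ.unop • z - σ.unop • z = (ρ - σ).unop • z := by
        rw [MulOpposite.unop_sub, sub_smul]
      rw [heq]
      exact Submodule.subset_span ⟨(ρ - σ).unop, z, by rwa [MulOpposite.op_unop], rfl⟩)
  have hb : ∀ (ρ : Rᵐᵒᵖ) (z : J),
      b (Submodule.Quotient.mk ρ) z = Submodule.Quotient.mk (ρ.unop • z) := fun _ _ => rfl
  have hone : ∀ (a : R),
      (MulOpposite.op a • (Submodule.Quotient.mk (1 : Rᵐᵒᵖ) : Rᵐᵒᵖ ⧸ A))
        = Submodule.Quotient.mk (MulOpposite.op a) := by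
    intro a
    rw [← Submodule.Quotient.mk_smul, smul_eq_mul, mul_one]
  have htp : IsTensorProductWithIdeal R J (Rᵐᵒᵖ ⧸ A) T b := by
    constructor
    · intro m m' z
      obtain ⟨ρ, rfl⟩ := Submodule.Quotient.mk_surjective A m
      obtain ⟨σ, rfl⟩ := Submodule.Quotient.mk_surjective A m'
      rw [← Submodule.Quotient.mk_add, hb, hb, hb, ← Submodule.Quotient.mk_add,
        MulOpposite.unop_add, add_smul]
    · intro m z w
      obtain ⟨ρ, rfl⟩ := Submodule.Quotient.mk_surjective A m
      rw [hb, hb, hb, ← Submodule.Quotient.mk_add, smul_add]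
    · intro m r z
      obtain ⟨ρ, rfl⟩ := Submodule.Quotient.mk_surjective A m
      rw [← Submodule.Quotient.mk_smul, hb, hb]
      congr 1
      rw [smul_eq_mul, MulOpposite.unop_mul, MulOpposite.unop_op, mul_smul]
    · intro m z r
      obtain ⟨ρ, rfl⟩ := Submodule.Quotient.mk_surjective A m
      rw [hb, hb, ← Submodule.Quotient.mk_smul]
      congr 1
      exact smul_comm _ _ _
    · intro P _ _ c hc1 hc2 hc3 hc4
      have hc0 : ∀ w : J, c 0 w = 0 := by
        intro w
        have h00 := hc1 0 0 w
        rw [add_zero] at h00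
        exact (left_eq_add.mp h00)
      have hmk0 : ∀ a : R, MulOpposite.op a ∈ A →
          (Submodule.Quotient.mk (MulOpposite.op a) : Rᵐᵒᵖ ⧸ A) = 0 :=
        fun a ha => (Submodule.Quotient.mk_eq_zero A).mpr ha
      let g : (J : Type u) →ₗ[Rᵐᵒᵖ] P :=
        { toFun := fun z => c (Submodule.Quotient.mk 1) z
          map_add' := fun z w => hc2 _ z w
          map_smul' := fun r z => by
            simp only [RingHom.id_apply]
            conv_lhs => rw [← MulOpposite.op_unop r]
            conv_rhs => rw [← MulOpposite.op_unop r]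
            exact hc4 _ z r.unop }
      have hNg : N ≤ LinearMap.ker g := by
        rw [Submodule.span_le]
        rintro z ⟨a, w, haA, hzw⟩
        simp only [SetLike.mem_coe, LinearMap.mem_ker]
        have hz' : z = a • w := Subtype.ext (by rw [hzw]; rfl)
        show c (Submodule.Quotient.mk 1) z = 0
        rw [hz', ← hc3 (Submodule.Quotient.mk 1) a w, hone a, hmk0 a haA]
        exact hc0 w
      have hprop : ∀ (m : Rᵐᵒᵖ ⧸ A) (z : J), (N.liftQ g hNg) (b m z) = c m z := by
        intro m z
        obtain ⟨ρ, rfl⟩ := Submodule.Quotient.mk_surjective A m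
        rw [hb, Submodule.liftQ_apply]
        show c (Submodule.Quotient.mk 1) (ρ.unop • z) = c (Submodule.Quotient.mk ρ) z
        rw [← hc3 (Submodule.Quotient.mk 1) ρ.unop z, hone ρ.unop, MulOpposite.op_unop]
      refine ⟨N.liftQ g hNg, hprop, ?_⟩
      intro f' hf'
      refine LinearMap.ext fun t => ?_
      obtain ⟨z, rfl⟩ := Submodule.Quotient.mk_surjective N t
      have hbz : (Submodule.Quotient.mk z : T) = b (Submodule.Quotient.mk 1) z := by
        rw [hb, MulOpposite.unop_one, one_smul]
      rw [hbz, hf', hprop]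
  have hMnoe : _root_.IsNoetherianObject (ModuleCat.of Rᵐᵒᵖ (Rᵐᵒᵖ ⧸ A)) := by
    haveI hwf : WellFoundedGT (Submodule Rᵐᵒᵖ ((ModuleCat.of Rᵐᵒᵖ (Rᵐᵒᵖ ⧸ A) : ModuleCat.{u} Rᵐᵒᵖ) : Type u)) := by
      exact isNoetherian_iff'.mp (inferInstanceAs (IsNoetherian Rᵐᵒᵖ (Rᵐᵒᵖ ⧸ A)))
    show WellFoundedGT (Subobject (ModuleCat.of Rᵐᵒᵖ (Rᵐᵒᵖ ⧸ A)))
    exact (ModuleCat.subobjectModule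
      (ModuleCat.of Rᵐᵒᵖ (Rᵐᵒᵖ ⧸ A))).toOrderEmbedding.wellFoundedGT
  let g₂ : (J : Type u) →ₗ[Rᵐᵒᵖ] (E : Type u) :=
    { toFun := fun z => MulOpposite.op (z : R) • e
      map_add' := fun z w => by
        show MulOpposite.op ((z : R) + (w : R)) • e = _
        rw [MulOpposite.op_add, add_smul]
      map_smul' := fun r z => by
        show MulOpposite.op ((z : R) * r.unop) • e = r • (MulOpposite.op (z : R) • e)
        rw [MulOpposite.op_mul, mul_smul, MulOpposite.op_unop] }
  have hNg₂ : N ≤ LinearMap.ker g₂ := by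
    rw [Submodule.span_le]
    rintro z ⟨a, w, haA, hzw⟩
    simp only [SetLike.mem_coe, LinearMap.mem_ker]
    show MulOpposite.op (z : R) • e = 0
    rw [hzw, MulOpposite.op_mul, mul_smul]
    have haG : MulOpposite.op a • e ∈ G := by
      have hψ : ψ (MulOpposite.op a) = 0 := haA
      have hq : (Submodule.Quotient.mk (MulOpposite.op a • e) : Ebar) = 0 := by
        rw [Submodule.Quotient.mk_smul]
        exact hψ
      exact (Submodule.Quotient.mk_eq_zero G).mp hq
    exact haG (w : R) w.2
  let φ := N.liftQ g₂ hNg₂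
  have hφy : MulOpposite.op y • e ∈ LinearMap.range φ := by
    refine ⟨Submodule.Quotient.mk ⟨y, hyJ⟩, ?_⟩
    rw [Submodule.liftQ_apply]
    rfl
  have hWne : LinearMap.range φ ≠ ⊥ := by
    intro hbot
    rw [hbot, Submodule.mem_bot] at hφy
    exact hy hφy
  have h1 : δ.δ (ModuleCat.of Rᵐᵒᵖ (LinearMap.range φ)) = δ.δ E :=
    delta_sub_eq δ E hcrit _ hWne
  have h2 : δ.δ (ModuleCat.of Rᵐᵒᵖ (LinearMap.range φ)) ≤ δ.δ (ModuleCat.of Rᵐᵒᵖ T) :=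
    calc δ.δ (ModuleCat.of Rᵐᵒᵖ (LinearMap.range φ))
        = δ.δ (ModuleCat.of Rᵐᵒᵖ (T ⧸ LinearMap.ker φ)) :=
          (delta_equiv δ (LinearMap.quotKerEquivRange φ)).symm
      _ ≤ δ.δ (ModuleCat.of Rᵐᵒᵖ T) := delta_quot δ T _
  have h3 : δ.δ (ModuleCat.of Rᵐᵒᵖ T) ≤ δ.δ (ModuleCat.of Rᵐᵒᵖ (Rᵐᵒᵖ ⧸ A)) :=
    htensor _ hMnoe J T b htp
  have h4 : δ.δ (ModuleCat.of Rᵐᵒᵖ (Rᵐᵒᵖ ⧸ A)) < δ.δ E :=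
    calc δ.δ (ModuleCat.of Rᵐᵒᵖ (Rᵐᵒᵖ ⧸ A))
        = δ.δ (ModuleCat.of Rᵐᵒᵖ (LinearMap.range ψ)) :=
          delta_equiv δ (LinearMap.quotKerEquivRange ψ)
      _ ≤ δ.δ (ModuleCat.of Rᵐᵒᵖ Ebar) := delta_sub δ Ebar _
      _ < δ.δ E := delta_coker_lt δ E hcrit G hG
  have hfin : δ.δ E ≤ δ.δ (ModuleCat.of Rᵐᵒᵖ (Rᵐᵒᵖ ⧸ A)) := h1 ▸ (h2.trans h3)
  exact absurd hfin (not_le.mpr h4)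
end
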